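/- Let K be a field, n a positive integer, Ω an abelian subgroup of the general linear group GL_n(K), and l ∈ K a nonzero scalar. For a, b ∈ Ω define the linear map Y^l_{a,b} : Mat_n(K) × Mat_n(K) → Mat_n(K) × Mat_n(K) by Y^l_{a,b}(M₁, M₂) = ( l·M₁ , l⁻¹·a M₂ a⁻¹ − b M₁ a⁻¹ + M₁ b a⁻¹ ). Then for all a, b, c ∈ Ω the parametric Yang–Baxter equation Y^l¹²_{a,b} ∘ Y^l¹³_{a,c} ∘ Y^l²³_{b,c} = Y^l²³_{b,c} ∘ Y^l¹³_{a,c} ∘ Y^l¹²_{a,b} holds as an identity of maps (Mat_n(K))³ → (Mat_n(K))³. -/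

import Mathlib

/-- For a map `Y : V × V → V × V`, the map `Y¹²` acting on the first two factors
of `V × V × V`. -/
def yb12 {V : Type*} (Y : V × V → V × V) : V × V × V → V × V × V :=
  fun p => ((Y (p.1, p.2.1)).1, (Y (p.1, p.2.1)).2, p.2.2)

/-- For a map `Y : V × V → V × V`, the map `Y¹³` acting on the first and third factors
of `V × V × V`. -/
def yb13 {V : Type*} (Y : V × V → V × V) : V × V × V → V × V × V :=
  fun p => ((Y (p.1, p.2.2)).1, p.2.1, (Y (p.1, p.2.2)).2)

/-- For a map `Y : V × V → V × V`, the map `Y²³` acting on the last two factors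
of `V × V × V`. -/
def yb23 {V : Type*} (Y : V × V → V × V) : V × V × V → V × V × V :=
  fun p => (p.1, (Y (p.2.1, p.2.2)).1, (Y (p.2.1, p.2.2)).2)

/-- `Y` is a Yang–Baxter map: `Y¹² ∘ Y¹³ ∘ Y²³ = Y²³ ∘ Y¹³ ∘ Y¹²`. -/
def IsYB {V : Type*} (Y : V × V → V × V) : Prop :=
  yb12 Y ∘ yb13 Y ∘ yb23 Y = yb23 Y ∘ yb13 Y ∘ yb12 Y

/-- A parametric family `Y a b` satisfies the parametric Yang–Baxter equation:
`Y¹²_{a,b} ∘ Y¹³_{a,c} ∘ Y²³_{b,c} = Y²³_{b,c} ∘ Y¹³_{a,c} ∘ Y¹²_{a,b}` for all `a b c`. -/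
def IsParamYB {V Ω : Type*} (Y : Ω → Ω → V × V → V × V) : Prop :=
  ∀ a b c : Ω, yb12 (Y a b) ∘ yb13 (Y a c) ∘ yb23 (Y b c)
             = yb23 (Y b c) ∘ yb13 (Y a c) ∘ yb12 (Y a b)

private lemma yb_lc {R : Type*} [Semigroup R] {A B : R} (h : B * A = A * B) (t : R) :
    B * (A * t) = A * (B * t) := by rw [← mul_assoc, h, mul_assoc]

private lemma yb_cancel {R : Type*} [Monoid R] {A A' : R} (h : A * A' = 1) (t : R) :
    A * (A' * t) = t := by rw [← mul_assoc, h, one_mul]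

theorem stmt19 {K : Type*} [Field K] {n : ℕ} (hn : 0 < n)
    (Ω : Subgroup (Matrix.GeneralLinearGroup (Fin n) K))
    (hcomm : ∀ x y : Ω,
      (x : Matrix.GeneralLinearGroup (Fin n) K) * (y : Matrix.GeneralLinearGroup (Fin n) K)
        = (y : Matrix.GeneralLinearGroup (Fin n) K) * (x : Matrix.GeneralLinearGroup (Fin n) K))
    (l : K) (hl : l ≠ 0) :
    IsParamYB (fun (a b : Ω)
        (p : Matrix (Fin n) (Fin n) K × Matrix (Fin n) (Fin n) K) =>
      (l • p.1,
       l⁻¹ • (((a : Matrix.GeneralLinearGroup (Fin n) K) : Matrix (Fin n) (Fin n) K) * p.2 *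
           (((a : Matrix.GeneralLinearGroup (Fin n) K)⁻¹ :
              Matrix.GeneralLinearGroup (Fin n) K) : Matrix (Fin n) (Fin n) K))
         - ((b : Matrix.GeneralLinearGroup (Fin n) K) : Matrix (Fin n) (Fin n) K) * p.1 *
           (((a : Matrix.GeneralLinearGroup (Fin n) K)⁻¹ :
              Matrix.GeneralLinearGroup (Fin n) K) : Matrix (Fin n) (Fin n) K)
         + p.1 * ((b : Matrix.GeneralLinearGroup (Fin n) K) : Matrix (Fin n) (Fin n) K) *
           (((a : Matrix.GeneralLinearGroup (Fin n) K)⁻¹ :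
              Matrix.GeneralLinearGroup (Fin n) K) : Matrix (Fin n) (Fin n) K))) := by
  intro a b c
  funext p
  obtain ⟨x, y, z⟩ := p
  -- commutation facts at the GL level
  have gab : Commute (a : Matrix.GeneralLinearGroup (Fin n) K)
      (b : Matrix.GeneralLinearGroup (Fin n) K) := hcomm a b
  have gac : Commute (a : Matrix.GeneralLinearGroup (Fin n) K)
      (c : Matrix.GeneralLinearGroup (Fin n) K) := hcomm a c
  have gbc : Commute (b : Matrix.GeneralLinearGroup (Fin n) K)
      (c : Matrix.GeneralLinearGroup (Fin n) K) := hcomm b c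
  set A : Matrix (Fin n) (Fin n) K := ((a : Matrix.GeneralLinearGroup (Fin n) K) :
    Matrix (Fin n) (Fin n) K) with hA
  set B : Matrix (Fin n) (Fin n) K := ((b : Matrix.GeneralLinearGroup (Fin n) K) :
    Matrix (Fin n) (Fin n) K) with hB
  set C : Matrix (Fin n) (Fin n) K := ((c : Matrix.GeneralLinearGroup (Fin n) K) :
    Matrix (Fin n) (Fin n) K) with hC
  set A' : Matrix (Fin n) (Fin n) K := (((a : Matrix.GeneralLinearGroup (Fin n) K)⁻¹ :
    Matrix.GeneralLinearGroup (Fin n) K) : Matrix (Fin n) (Fin n) K) with hA'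
  set B' : Matrix (Fin n) (Fin n) K := (((b : Matrix.GeneralLinearGroup (Fin n) K)⁻¹ :
    Matrix.GeneralLinearGroup (Fin n) K) : Matrix (Fin n) (Fin n) K) with hB'
  set C' : Matrix (Fin n) (Fin n) K := (((c : Matrix.GeneralLinearGroup (Fin n) K)⁻¹ :
    Matrix.GeneralLinearGroup (Fin n) K) : Matrix (Fin n) (Fin n) K) with hC'
  have hAA' : A * A' = 1 := Units.mul_inv _
  have hA'A : A' * A = 1 := Units.inv_mul _
  have hBB' : B * B' = 1 := Units.mul_inv _
  have hB'B : B' * B = 1 := Units.inv_mul _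
  have hCC' : C * C' = 1 := Units.mul_inv _
  have hC'C : C' * C = 1 := Units.inv_mul _
  -- matrix-level commutes (oriented: primed letters move left, A < B < C among unprimed,
  -- A' < B' < C' among primed)
  have cBA : B * A = A * B := (gab.map (Units.coeHom _)).symm.eq
  have cCA : C * A = A * C := (gac.map (Units.coeHom _)).symm.eq
  have cCB : C * B = B * C := (gbc.map (Units.coeHom _)).symm.eq
  have cAA' : A * A' = A' * A := by rw [hAA', hA'A]
  have cBB' : B * B' = B' * B := by rw [hBB', hB'B]
  have cCC' : C * C' = C' * C := by rw [hCC', hC'C]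
  have cBA' : B * A' = A' * B := ((gab.symm.inv_right).map (Units.coeHom _)).eq
  have cCA' : C * A' = A' * C := ((gac.symm.inv_right).map (Units.coeHom _)).eq
  have cAB' : A * B' = B' * A := ((gab.inv_right).map (Units.coeHom _)).eq
  have cCB' : C * B' = B' * C := ((gbc.symm.inv_right).map (Units.coeHom _)).eq
  have cAC' : A * C' = C' * A := ((gac.inv_right).map (Units.coeHom _)).eq
  have cBC' : B * C' = C' * B := ((gbc.inv_right).map (Units.coeHom _)).eq
  have cB'A' : B' * A' = A' * B' :=
    ((gab.inv_left.inv_right).map (Units.coeHom _)).symm.eq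
  have cC'A' : C' * A' = A' * C' :=
    ((gac.inv_left.inv_right).map (Units.coeHom _)).symm.eq
  have cC'B' : C' * B' = B' * C' :=
    ((gbc.inv_left.inv_right).map (Units.coeHom _)).symm.eq
  simp only [yb12, yb13, yb23, Function.comp_apply, Prod.mk.injEq]
  simp only [← hA, ← hB, ← hC, ← hA', ← hB', ← hC']
  refine ⟨trivial, ?_, ?_⟩ <;>
  · simp only [smul_sub, smul_add, mul_sub, sub_mul, mul_add, add_mul,
      smul_mul_assoc, mul_smul_comm, smul_smul, mul_assoc,
      inv_mul_cancel₀ hl, mul_inv_cancel₀ hl, one_smul,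
      hAA', hA'A, hBB', hB'B, hCC', hC'C, mul_one, one_mul,
      yb_cancel hAA', yb_cancel hA'A, yb_cancel hBB', yb_cancel hB'B,
      yb_cancel hCC', yb_cancel hC'C,
      cBA, cCA, cCB, cBA', cCA', cAB', cCB', cAC', cBC', cB'A', cC'A', cC'B',
      cAA', cBB', cCC',
      yb_lc cBA, yb_lc cCA, yb_lc cCB, yb_lc cBA', yb_lc cCA', yb_lc cAB',
      yb_lc cCB', yb_lc cAC', yb_lc cBC', yb_lc cB'A', yb_lc cC'A', yb_lc cC'B',
      yb_lc cAA', yb_lc cBB', yb_lc cCC']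
    try abel
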